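/- Under the stochastic PBM environment, the expected regret satisfies R(T) ≥ (1/2) ∑_{t=1}^T ∑_{i=1}^n ∑_{j=1}^m Δ_{i,j} · E[x_{t,i,j}], where Δ_{i,j} is the PBM suboptimality gap defined by Δ_{i,j} = (β_j − β_{j+1})(α_j − α_i) for j < i, 0 for i = j, and (β_{j−1} − β_j)(α_i − α_j) for j > i. -/

import Mathlib

open Finset MeasureTheory

private lemma tele_sum (β : ℕ → ℝ) (m j : ℕ) (hj : j ≤ m + 1) :
    ∑ k ∈ Finset.Icc j m, (β k - β (k + 1)) = β j - β (m + 1) := by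
  rw [← Finset.Ico_add_one_right_eq_Icc, Finset.sum_Ico_eq_sum_range]
  have := Finset.sum_range_sub' (fun i => β (j + i)) (m + 1 - j)
  simp only [add_zero] at this
  rw [show j + (m + 1 - j) = m + 1 by omega] at this
  exact this

private lemma sum_alpha_le (n : ℕ) (α : ℕ → ℝ)
    (hmono : ∀ i k, 1 ≤ i → i ≤ k → k ≤ n → α k ≤ α i) :
    ∀ A : Finset ℕ, A ⊆ Finset.Icc 1 n →
      ∑ a ∈ A, α a ≤ ∑ l ∈ Finset.Icc 1 A.card, α l := by
  intro A
  induction A using Finset.strongInduction with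
  | _ A ih =>
    intro hA
    rcases A.eq_empty_or_nonempty with rfl | hne
    · simp
    · set a := A.max' hne with ha
      have haA : a ∈ A := A.max'_mem hne
      have h1a : 1 ≤ a ∧ a ≤ n := by
        have := hA haA; simp only [Finset.mem_Icc] at this; exact this
      have hcard : A.card ≤ a := by
        have hsub : A ⊆ Finset.Icc 1 a := by
          intro x hx
          have := hA hx
          simp only [Finset.mem_Icc] at this ⊢
          exact ⟨this.1, A.le_max' x hx⟩
        calc A.card ≤ (Finset.Icc 1 a).card := Finset.card_le_card hsub
          _ = a := by rw [Nat.card_Icc]; omega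
      have hcard1 : 1 ≤ A.card := hne.card_pos
      have herase := ih (A.erase a) (Finset.erase_ssubset haA)
        (fun x hx => hA (Finset.erase_subset _ _ hx))
      rw [Finset.card_erase_of_mem haA] at herase
      have hαa : α a ≤ α A.card := hmono A.card a hcard1 hcard h1a.2
      have hsplit : ∑ x ∈ A, α x = ∑ x ∈ A.erase a, α x + α a :=
        (Finset.sum_erase_add A _ haA).symm
      have hIcc : Finset.Icc 1 A.card = insert A.card (Finset.Icc 1 (A.card - 1)) := by
        ext x; simp only [Finset.mem_Icc, Finset.mem_insert]; omega
      rw [hsplit, hIcc, Finset.sum_insert (by simp only [Finset.mem_Icc]; omega)]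
      linarith

private lemma det_self_bounding (n m : ℕ) (hm : 1 ≤ m) (hmn : m ≤ n) (α β : ℕ → ℝ)
    (hmono : ∀ i k, 1 ≤ i → i ≤ k → k ≤ n → α k ≤ α i)
    (hβstrict : ∀ j, 1 ≤ j → j ≤ m → β j > β (j + 1))
    (hβlast : β (m + 1) = 0)
    (Δ : ℕ → ℕ → ℝ)
    (hΔ : ∀ i j, Δ i j =
      if j < i then (β j - β (j + 1)) * (α j - α i)
      else if j = i then 0
      else (β (j - 1) - β j) * (α i - α j))
    (σ : ℕ → ℕ) (hσr : ∀ j ∈ Finset.Icc 1 m, σ j ∈ Finset.Icc 1 n)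
    (hσi : Set.InjOn σ (Finset.Icc 1 m)) :
    (1 / 2) * ∑ j ∈ Finset.Icc 1 m, Δ (σ j) j
      ≤ ∑ j ∈ Finset.Icc 1 m, (α j * β j - α (σ j) * β j) := by
  classical
  set d : ℕ → ℝ := fun k => β k - β (k + 1) with hd_def
  set S : ℕ → ℝ := fun k => ∑ j ∈ Finset.Icc 1 k, (α j - α (σ j)) with hS_def
  have hd : ∀ k, 1 ≤ k → k ≤ m → 0 ≤ d k := by
    intro k h1 h2
    have := hβstrict k h1 h2
    simp only [hd_def]; linarith
  -- injectivity on subintervals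
  have hinj : ∀ k ≤ m, ∀ x ∈ Finset.Icc 1 k, ∀ y ∈ Finset.Icc 1 k, σ x = σ y → x = y := by
    intro k hk x hx y hy hxy
    have hxm : x ∈ (Finset.Icc 1 m : Finset ℕ) := by
      simp only [Finset.mem_Icc] at hx ⊢; omega
    have hym : y ∈ (Finset.Icc 1 m : Finset ℕ) := by
      simp only [Finset.mem_Icc] at hy ⊢; omega
    exact hσi hxm hym hxy
  have hS0 : ∀ k, k ≤ m → 0 ≤ S k := by
    intro k hk
    have himg : ∑ j ∈ Finset.Icc 1 k, α (σ j) = ∑ a ∈ (Finset.Icc 1 k).image σ, α a :=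
      (Finset.sum_image (hinj k hk)).symm
    have hsub : (Finset.Icc 1 k).image σ ⊆ Finset.Icc 1 n := by
      intro a haa
      obtain ⟨x, hx, rfl⟩ := Finset.mem_image.mp haa
      apply hσr
      simp only [Finset.mem_Icc] at hx ⊢; omega
    have hcard : ((Finset.Icc 1 k).image σ).card = k := by
      rw [Finset.card_image_of_injOn (fun x hx y hy => hinj k hk x hx y hy), Nat.card_Icc]
      omega
    have hle := sum_alpha_le n α hmono _ hsub
    rw [hcard] at hle
    have : S k = ∑ j ∈ Finset.Icc 1 k, α j - ∑ j ∈ Finset.Icc 1 k, α (σ j) := by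
      simp only [hS_def, Finset.sum_sub_distrib]
    rw [this, himg]
    linarith
  have hSsplit : ∀ k, 1 ≤ k → S k = (α k - α (σ k)) + S (k - 1) := by
    intro k h1
    have hIcc : Finset.Icc 1 k = insert k (Finset.Icc 1 (k - 1)) := by
      ext x; simp only [Finset.mem_Icc, Finset.mem_insert]; omega
    simp only [hS_def]
    rw [hIcc, Finset.sum_insert (by simp only [Finset.mem_Icc]; omega)]
  have hSstep : ∀ k, 1 ≤ k → k ≤ m → α k - α (σ k) ≤ S k := by
    intro k h1 h2
    have := hS0 (k - 1) (by omega)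
    rw [hSsplit k h1]; linarith
  have hSdisp : ∀ j, 1 ≤ j → j ≤ m → σ j < j → α (σ j) - α j ≤ S (j - 1) := by
    intro j h1 h2 hlt
    have hjm : j ∈ (Finset.Icc 1 m : Finset ℕ) := by simp only [Finset.mem_Icc]; omega
    have hnotmem : σ j ∉ (Finset.Icc 1 (j - 1)).image σ := by
      intro h
      obtain ⟨x, hx, hxe⟩ := Finset.mem_image.mp h
      have hxm : x ∈ (Finset.Icc 1 m : Finset ℕ) := by
        simp only [Finset.mem_Icc] at hx ⊢; omega
      have := hσi hxm hjm hxe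
      simp only [Finset.mem_Icc] at hx; omega
    set A := insert (σ j) ((Finset.Icc 1 (j - 1)).image σ) with hA_def
    have hsub : A ⊆ Finset.Icc 1 n := by
      apply Finset.insert_subset (hσr j hjm)
      intro a haa
      obtain ⟨x, hx, rfl⟩ := Finset.mem_image.mp haa
      apply hσr
      simp only [Finset.mem_Icc] at hx ⊢; omega
    have hcard : A.card = j := by
      rw [hA_def, Finset.card_insert_of_notMem hnotmem,
        Finset.card_image_of_injOn (fun x hx y hy => hinj (j - 1) (by omega) x hx y hy),
        Nat.card_Icc]
      omega
    have hle := sum_alpha_le n α hmono A hsub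
    rw [hcard] at hle
    have hsumA : ∑ a ∈ A, α a = α (σ j) + ∑ x ∈ Finset.Icc 1 (j - 1), α (σ x) := by
      rw [hA_def, Finset.sum_insert hnotmem,
        Finset.sum_image (hinj (j - 1) (by omega))]
    have hIccj : ∑ l ∈ Finset.Icc 1 j, α l = α j + ∑ l ∈ Finset.Icc 1 (j - 1), α l := by
      have hIcc : Finset.Icc 1 j = insert j (Finset.Icc 1 (j - 1)) := by
        ext x; simp only [Finset.mem_Icc, Finset.mem_insert]; omega
      rw [hIcc, Finset.sum_insert (by simp only [Finset.mem_Icc]; omega)]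
    have hSval : S (j - 1) = ∑ l ∈ Finset.Icc 1 (j - 1), α l
        - ∑ l ∈ Finset.Icc 1 (j - 1), α (σ l) := by
      simp only [hS_def, Finset.sum_sub_distrib]
    rw [hSval]
    linarith [hle, hsumA ▸ hle]
  -- Abel summation
  have habel : ∑ j ∈ Finset.Icc 1 m, (α j * β j - α (σ j) * β j)
      = ∑ k ∈ Finset.Icc 1 m, d k * S k := by
    have h1 : ∀ j ∈ Finset.Icc 1 m,
        α j * β j - α (σ j) * β j = ∑ k ∈ Finset.Icc j m, (α j - α (σ j)) * d k := by
      intro j hj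
      simp only [Finset.mem_Icc] at hj
      rw [← Finset.mul_sum]
      have : ∑ k ∈ Finset.Icc j m, d k = β j := by
        simp only [hd_def]
        rw [tele_sum β m j (by omega), hβlast]; ring
      rw [this]; ring
    rw [Finset.sum_congr rfl h1]
    have hico : ∀ a b : ℕ, Finset.Icc a b = Finset.Ico a (b + 1) := by
      intro a b; rw [Finset.Ico_add_one_right_eq_Icc]
    calc ∑ j ∈ Finset.Icc 1 m, ∑ k ∈ Finset.Icc j m, (α j - α (σ j)) * d k
        = ∑ j ∈ Finset.Ico 1 (m + 1), ∑ k ∈ Finset.Ico j (m + 1), (α j - α (σ j)) * d k := by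
          rw [← hico]; exact Finset.sum_congr rfl fun j _ => by rw [← hico]
      _ = ∑ k ∈ Finset.Ico 1 (m + 1), ∑ j ∈ Finset.Ico 1 (k + 1), (α j - α (σ j)) * d k :=
          Finset.sum_Ico_Ico_comm 1 (m + 1) _
      _ = ∑ k ∈ Finset.Icc 1 m, d k * S k := by
          rw [← hico]
          refine Finset.sum_congr rfl fun k _ => ?_
          rw [← hico, ← Finset.sum_mul]
          simp only [hS_def]; ring
  have hP : ∑ j ∈ Finset.Icc 1 m, (if j < σ j then Δ (σ j) j else 0)
      ≤ ∑ k ∈ Finset.Icc 1 m, d k * S k := by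
    apply Finset.sum_le_sum
    intro k hk
    simp only [Finset.mem_Icc] at hk
    by_cases h : k < σ k
    · rw [if_pos h, hΔ, if_pos h]
      exact mul_le_mul_of_nonneg_left (hSstep k hk.1 hk.2) (hd k hk.1 hk.2)
    · rw [if_neg h]
      exact mul_nonneg (hd k hk.1 hk.2) (hS0 k hk.2)
  have hN : ∑ j ∈ Finset.Icc 1 m, (if σ j < j then Δ (σ j) j else 0)
      ≤ ∑ k ∈ Finset.Icc 1 m, d k * S k := by
    have h1mem : (1 : ℕ) ∈ (Finset.Icc 1 m : Finset ℕ) := by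
      simp only [Finset.mem_Icc]; omega
    have hσ1 : ¬ σ 1 < 1 := by
      have := hσr 1 h1mem
      simp only [Finset.mem_Icc] at this; omega
    have hIns : Finset.Icc 1 m = insert 1 (Finset.Icc 2 m) := by
      ext x; simp only [Finset.mem_Icc, Finset.mem_insert]; omega
    rw [hIns, Finset.sum_insert (by simp only [Finset.mem_Icc]; omega), if_neg hσ1, zero_add,
      ← hIns]
    have himg : Finset.Icc 2 m = (Finset.Icc 1 (m - 1)).image (· + 1) := by
      ext x
      simp only [Finset.mem_Icc, Finset.mem_image]
      constructor
      · intro h; exact ⟨x - 1, by omega, by omega⟩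
      · rintro ⟨y, hy, rfl⟩; omega
    rw [himg, Finset.sum_image (fun x _ y _ h => by omega)]
    have hterm : ∀ k ∈ Finset.Icc 1 (m - 1),
        (if σ (k + 1) < k + 1 then Δ (σ (k + 1)) (k + 1) else 0) ≤ d k * S k := by
      intro k hk
      simp only [Finset.mem_Icc] at hk
      by_cases h : σ (k + 1) < k + 1
      · rw [if_pos h, hΔ, if_neg (by omega), if_neg (by omega)]
        have hdisp := hSdisp (k + 1) (by omega) (by omega) h
        have : (k + 1 : ℕ) - 1 = k := by omega
        rw [this] at hdisp ⊢
        exact mul_le_mul_of_nonneg_left hdisp (hd k hk.1 (by omega))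
      · rw [if_neg h]
        exact mul_nonneg (hd k hk.1 (by omega)) (hS0 k (by omega))
    calc ∑ k ∈ Finset.Icc 1 (m - 1), (if σ (k + 1) < k + 1 then Δ (σ (k + 1)) (k + 1) else 0)
        ≤ ∑ k ∈ Finset.Icc 1 (m - 1), d k * S k := Finset.sum_le_sum hterm
      _ ≤ ∑ k ∈ Finset.Icc 1 m, d k * S k := by
          apply Finset.sum_le_sum_of_subset_of_nonneg
          · intro x hx; simp only [Finset.mem_Icc] at hx ⊢; omega
          · intro k hk _
            simp only [Finset.mem_Icc] at hk
            exact mul_nonneg (hd k hk.1 hk.2) (hS0 k hk.2)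
  have hsplitΔ : ∑ j ∈ Finset.Icc 1 m, Δ (σ j) j
      = ∑ j ∈ Finset.Icc 1 m, (if j < σ j then Δ (σ j) j else 0)
        + ∑ j ∈ Finset.Icc 1 m, (if σ j < j then Δ (σ j) j else 0) := by
    rw [← Finset.sum_add_distrib]
    refine Finset.sum_congr rfl fun j _ => ?_
    rcases lt_trichotomy j (σ j) with h | h | h
    · rw [if_pos h, if_neg (by omega)]; ring
    · rw [if_neg (by omega), if_neg (by omega), hΔ, if_neg (by omega), if_pos h]; ring
    · rw [if_neg (by omega), if_pos h]; ring
  rw [habel]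
  linarith [hP, hN, hsplitΔ]

private lemma int_comp {Ω : Type*} [MeasurableSpace Ω] (μ : Measure Ω) [IsProbabilityMeasure μ]
    (f : Ω → ℕ) (hf : Measurable f) (S : Finset ℕ) (hS : ∀ ω, f ω ∈ S) (g : ℕ → ℝ) :
    Integrable (fun ω => g (f ω)) μ ∧
      ∫ ω, g (f ω) ∂μ = ∑ i ∈ S, g i * (μ {ω | f ω = i}).toReal := by
  have hmeas : ∀ i : ℕ, MeasurableSet {ω | f ω = i} := fun i => hf (measurableSet_singleton i)
  have hintind : ∀ i ∈ S, Integrable (fun ω => Set.indicator {ω' | f ω' = i} (fun _ => g i) ω) μ :=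
    fun i _ => (integrable_const (g i)).indicator (hmeas i)
  have key : (fun ω => g (f ω))
      = fun ω => ∑ i ∈ S, Set.indicator {ω' | f ω' = i} (fun _ => g i) ω := by
    funext ω
    rw [Finset.sum_eq_single_of_mem (f ω) (hS ω)]
    · rw [Set.indicator_of_mem (by exact rfl)]
    · intro i _ hne
      exact (Set.indicator_of_notMem (fun h => hne ((Set.mem_setOf_eq ▸ h).symm)) _)
  constructor
  · rw [key]
    exact integrable_finset_sum _ hintind
  · rw [key, integral_finset_sum _ hintind]
    refine Finset.sum_congr rfl fun i _ => ?_
    rw [integral_indicator_const (g i) (hmeas i), smul_eq_mul, mul_comm, Measure.real]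

/-- Self-bounding constraint for the regret in the stochastic PBM environment:
`R(T) ≥ (1/2) ∑_t ∑_i ∑_j Δ_{i,j} E[x_{t,i,j}]`, where `I t j ω` is the item
placed at position `j` in round `t` and `x_{t,i,j} = P(I t j = i)`. -/
theorem pbm_regret_self_bounding
    {Ω : Type*} [MeasurableSpace Ω] (μ : Measure Ω) [IsProbabilityMeasure μ]
    (n m T : ℕ) (hm : 1 ≤ m) (hmn : m ≤ n)
    (α β : ℕ → ℝ)
    (hα01 : ∀ i ∈ Finset.Icc 1 n, α i ∈ Set.Icc (0:ℝ) 1)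
    (hαstrict : ∀ i, 1 ≤ i → i ≤ m → α i > α (i + 1))
    (hαmono : ∀ i, m + 1 ≤ i → i < n → α i ≥ α (i + 1))
    (hβpos : ∀ j ∈ Finset.Icc 1 m, 0 < β j ∧ β j ≤ 1)
    (hβstrict : ∀ j, 1 ≤ j → j ≤ m → β j > β (j + 1))
    (hβlast : β (m + 1) = 0)
    (Δ : ℕ → ℕ → ℝ)
    (hΔ : ∀ i j, Δ i j =
      if j < i then (β j - β (j + 1)) * (α j - α i)
      else if j = i then 0
      else (β (j - 1) - β j) * (α i - α j))
    (I : ℕ → ℕ → Ω → ℕ)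
    (hImeas : ∀ t j, Measurable (I t j))
    (hIrange : ∀ t ω, ∀ j ∈ Finset.Icc 1 m, I t j ω ∈ Finset.Icc 1 n)
    (hIinj : ∀ t ω, Set.InjOn (fun j => I t j ω) (Finset.Icc 1 m)) :
    ∑ t ∈ Finset.Icc 1 T,
        ∫ ω, (∑ j ∈ Finset.Icc 1 m, (α j * β j - α (I t j ω) * β j)) ∂μ
      ≥ (1 / 2) * ∑ t ∈ Finset.Icc 1 T, ∑ i ∈ Finset.Icc 1 n,
          ∑ j ∈ Finset.Icc 1 m, Δ i j * (μ {ω | I t j ω = i}).toReal := by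
  have hstep : ∀ i, 1 ≤ i → i < n → α (i + 1) ≤ α i := by
    intro i h1 h2
    by_cases h : i ≤ m
    · exact le_of_lt (hαstrict i h1 h)
    · exact hαmono i (by omega) h2
  have hmono : ∀ i k, 1 ≤ i → i ≤ k → k ≤ n → α k ≤ α i := by
    intro i k h1 hik hkn
    induction k with
    | zero => omega
    | succ k ih =>
      rcases Nat.eq_or_lt_of_le hik with h | h
      · rw [h]
      · calc α (k + 1) ≤ α k := hstep k (by omega) (by omega)
          _ ≤ α i := ih (by omega) (by omega)
  have key : ∀ t, (1 / 2) * ∑ i ∈ Finset.Icc 1 n, ∑ j ∈ Finset.Icc 1 m,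
        Δ i j * (μ {ω | I t j ω = i}).toReal
      ≤ ∫ ω, (∑ j ∈ Finset.Icc 1 m, (α j * β j - α (I t j ω) * β j)) ∂μ := by
    intro t
    have hint1 : ∀ j ∈ Finset.Icc 1 m,
        Integrable (fun ω => α j * β j - α (I t j ω) * β j) μ := fun j hj =>
      (int_comp μ (I t j) (hImeas t j) (Finset.Icc 1 n) (fun ω => hIrange t ω j hj)
        (fun i => α j * β j - α i * β j)).1
    have hint2 : ∀ j ∈ Finset.Icc 1 m, Integrable (fun ω => Δ (I t j ω) j) μ := fun j hj =>
      (int_comp μ (I t j) (hImeas t j) (Finset.Icc 1 n) (fun ω => hIrange t ω j hj)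
        (fun i => Δ i j)).1
    have hval : ∀ j ∈ Finset.Icc 1 m,
        ∑ i ∈ Finset.Icc 1 n, Δ i j * (μ {ω | I t j ω = i}).toReal
          = ∫ ω, Δ (I t j ω) j ∂μ := fun j hj =>
      ((int_comp μ (I t j) (hImeas t j) (Finset.Icc 1 n) (fun ω => hIrange t ω j hj)
        (fun i => Δ i j)).2).symm
    calc (1 / 2) * ∑ i ∈ Finset.Icc 1 n, ∑ j ∈ Finset.Icc 1 m,
          Δ i j * (μ {ω | I t j ω = i}).toReal
        = (1 / 2) * ∫ ω, (∑ j ∈ Finset.Icc 1 m, Δ (I t j ω) j) ∂μ := by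
          rw [Finset.sum_comm, Finset.sum_congr rfl hval, ← integral_finset_sum _ hint2]
      _ = ∫ ω, (1 / 2) * (∑ j ∈ Finset.Icc 1 m, Δ (I t j ω) j) ∂μ := by
          rw [integral_const_mul]
      _ ≤ ∫ ω, (∑ j ∈ Finset.Icc 1 m, (α j * β j - α (I t j ω) * β j)) ∂μ := by
          apply integral_mono
          · exact (Integrable.const_mul (integrable_finset_sum _ hint2) (1 / 2))
          · exact integrable_finset_sum _ hint1
          · intro ω
            exact det_self_bounding n m hm hmn α β hmono hβstrict hβlast Δ hΔ
              (fun j => I t j ω) (fun j hj => hIrange t ω j hj) (hIinj t ω)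
  rw [ge_iff_le, Finset.mul_sum]
  exact Finset.sum_le_sum fun t _ => key t
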